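/- arXiv:1907.13104 — 2 statements merged into one kernel-verified Lean document; each statement's English description precedes it below -/
import Mathlib

section
/- Every finite outerplanar graph is isomorphic to a subgraph of the infinite complete outerplanar graph T*, whose vertex set is the set of binary strings (a_1,...,a_n) with a_1=0, a_2=1, a_3=0, and where (a,b) is an edge (for |a| = m ≤ n = |b|, a a prefix-consistent extension) whenever either b_{m+1}=0 and b_i=1 for all i>m+1, or b_{m+1}=1 and b_i=0 for all i>m+1. -/
/-- Vertices of the infinite complete outerplanar graph `T*`: binary strings with
`a₁ = 0, a₂ = 1, a₃ = 0` (including the two root-edge vertices `0` and `01`). -/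
def TstarVert (l : List Bool) : Prop :=
  l = [false] ∨ l = [false, true] ∨ ∃ t : List Bool, l = false :: true :: false :: t

/-- One-sided adjacency in `T*`: `b` extends `a` by `0` followed only by `1`s, or by
`1` followed only by `0`s. -/
def TstarAdjRel (a b : List Bool) : Prop :=
  ∃ k : ℕ, b = a ++ false :: List.replicate k true ∨ b = a ++ true :: List.replicate k false

/-- The infinite complete outerplanar graph `T*`. -/
def Tstar : SimpleGraph {l : List Bool // TstarVert l} where
  Adj a b := TstarAdjRel a.1 b.1 ∨ TstarAdjRel b.1 a.1
  symm := ⟨by intro a b h; tauto⟩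
  loopless := by
    refine ⟨?_⟩
    intro a h
    rcases h with h | h <;> rcases h with ⟨k, h | h⟩ <;>
      · have := congrArg List.length h
        simp at this


section Aux
open Real
def EdgeOK (X Y : List Bool) : Prop := TstarAdjRel X Y ∨ TstarAdjRel Y X

lemma adjrel_iff (X Y : List Bool) :
    TstarAdjRel X Y ↔ ∃ c k, Y = X ++ c :: List.replicate k (!c) := by
  constructor
  · rintro ⟨k, h | h⟩
    · exact ⟨false, k, by simpa using h⟩
    · exact ⟨true, k, by simpa using h⟩
  · rintro ⟨c, k, h⟩
    cases c
    · exact ⟨k, Or.inl (by simpa using h)⟩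
    · exact ⟨k, Or.inr (by simpa using h)⟩

noncomputable def apex (X Y : List Bool) : List Bool :=
  if X.length < Y.length then Y ++ [!(Y.getD X.length false)]
  else X ++ [!(X.getD Y.length false)]

lemma getD_append_cons (X : List Bool) (c : Bool) (L : List Bool) :
    (X ++ c :: L).getD X.length false = c := by
  rw [List.getD_eq_getElem?_getD, List.getElem?_append_right le_rfl]
  simp

lemma apex_eq_left {X Y : List Bool} {c : Bool} {L : List Bool} (h : Y = X ++ c :: L) :
    apex X Y = Y ++ [!c] := by
  subst h; rw [apex, if_pos (by simp), getD_append_cons]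

lemma apex_eq_right {X Y : List Bool} {c : Bool} {L : List Bool} (h : X = Y ++ c :: L) :
    apex X Y = X ++ [!c] := by
  subst h; rw [apex, if_neg (by simp), getD_append_cons]

lemma apex_spec {X Y : List Bool} (h : EdgeOK X Y) :
    ∃ b, EdgeOK X (apex X Y) ∧ EdgeOK (apex X Y) Y ∧
      apex X (apex X Y) = apex X Y ++ [b] ∧ apex (apex X Y) Y = apex X Y ++ [!b] ∧
      X.length < (apex X Y).length ∧ Y.length < (apex X Y).length ∧
      X.length ≠ Y.length := by
  rcases h with h | h <;> rw [adjrel_iff] at h <;> obtain ⟨c, k, rfl⟩ := h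
  · -- Y = X ++ c :: rep k !c,  apex = Y ++ [!c]
    have hap : apex X (X ++ c :: List.replicate k (!c))
        = (X ++ c :: List.replicate k (!c)) ++ [!c] := apex_eq_left rfl
    refine ⟨!c, ?_, ?_, ?_, ?_, ?_, ?_, ?_⟩
    · rw [hap]
      refine Or.inl ((adjrel_iff _ _).2 ⟨c, k+1, ?_⟩)
      simp [List.replicate_succ']
    · rw [hap]
      exact Or.inr ((adjrel_iff _ _).2 ⟨!c, 0, by simp⟩)
    · rw [hap]
      rw [apex_eq_left (c := c) (L := List.replicate k (!c) ++ [!c]) (by simp)]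
    · rw [hap]
      rw [apex_eq_right (c := !c) (L := []) (by simp)]
    · rw [hap]; simp
    · rw [hap]; simp
    · simp
  · -- X = Y ++ c :: rep k !c,  apex = X ++ [!c]
    have hap : apex (Y ++ c :: List.replicate k (!c)) Y
        = (Y ++ c :: List.replicate k (!c)) ++ [!c] := apex_eq_right rfl
    refine ⟨c, ?_, ?_, ?_, ?_, ?_, ?_, ?_⟩
    · rw [hap]
      exact Or.inl ((adjrel_iff _ _).2 ⟨!c, 0, by simp⟩)
    · rw [hap]
      refine Or.inr ((adjrel_iff _ _).2 ⟨c, k+1, ?_⟩)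
      simp [List.replicate_succ']
    · rw [hap]
      rw [apex_eq_left (c := !c) (L := []) (by simp)]
      simp
    · rw [hap]
      rw [apex_eq_right (c := c) (L := List.replicate k (!c) ++ [!c]) (by simp)]
    · rw [hap]; simp
    · rw [hap]; simp
    · simp

def Noncross (E : ℕ → ℕ → Prop) : Prop :=
  ∀ i j k l, E i j → E k l → i < k → k < j → j < l → False

lemma split_exists (E : ℕ → ℕ → Prop) (hE : Noncross E) (l r : ℕ) (h2 : l + 2 ≤ r) :
    ∃ m, l < m ∧ m < r ∧
      ∀ i j, E i j → l ≤ i → j ≤ r → i < m → m < j → i = l ∧ j = r := by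
  classical
  by_cases hA : ∃ i j, E i j ∧ l ≤ i ∧ i < j ∧ j ≤ r ∧ ¬(i = l ∧ j = r)
  · set S : ℕ → Prop := fun d =>
      ∃ i j, E i j ∧ l ≤ i ∧ i < j ∧ j ≤ r ∧ ¬(i = l ∧ j = r) ∧ j - i = d with hS
    obtain ⟨i0, j0, he0, hl0, hij0, hr0, hne0⟩ := hA
    have hS0 : S (j0 - i0) := ⟨i0, j0, he0, hl0, hij0, hr0, hne0, rfl⟩
    have hd0 : j0 - i0 ≤ r := by omega
    have hSd : S (Nat.findGreatest S r) := Nat.findGreatest_spec hd0 hS0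
    have hmax : ∀ d', Nat.findGreatest S r < d' → d' ≤ r → ¬ S d' :=
      fun d' h1 h2 => Nat.findGreatest_is_greatest h1 h2
    obtain ⟨i, j, he, hli, hij, hjr, hne, hd⟩ := hSd
    by_cases hi : l < i
    · -- m := i
      refine ⟨i, hi, by omega, ?_⟩
      intro i' j' he' hli' hjr' hi' hj'
      by_contra hne'
      -- (i',j') is a non-full arc, i' < i < j'
      have hij' : i' < j' := by omega
      have hle : j' - i' ≤ Nat.findGreatest S r := by
        by_contra hgt
        exact hmax _ (by omega) (by omega) ⟨i', j', he', hli', hij', hjr', hne', rfl⟩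
      -- if j' < j : crossing; else j' ≥ j gives longer arc
      rcases lt_or_ge j' j with hc | hc
      · exact hE i' j' i j he' he hi' hj' hc
      · omega
    · -- i = l, so j < r ; m := j
      have hi' : i = l := by omega
      have hjr2 : j < r := by
        rcases lt_or_ge j r with h | h
        · exact h
        · exact absurd ⟨hi', by omega⟩ hne
      refine ⟨j, by omega, hjr2, ?_⟩
      intro i' j' he' hli' hjr' hi'' hj''
      by_contra hne'
      have hij' : i' < j' := by omega
      have hle : j' - i' ≤ Nat.findGreatest S r := by
        by_contra hgt
        exact hmax _ (by omega) (by omega) ⟨i', j', he', hli', hij', hjr', hne', rfl⟩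
      rcases lt_or_ge l i' with hc | hc
      · exact hE i j i' j' he he' (by omega) hi'' hj''
      · -- i' = l, arc (l, j') with j' > j : longer, non-full since ¬(i'=l∧j'=r)
        have : i' = l := by omega
        have : j' < r := by
          rcases lt_or_ge j' r with h | h
          · exact h
          · exact absurd ⟨this, by omega⟩ hne'
        omega
  · push_neg at hA
    refine ⟨l + 1, by omega, by omega, ?_⟩
    intro i j he hli hjr hi hj
    by_contra hne
    exact hne (hA i j he hli (by omega) hjr)

open scoped Classical in
noncomputable def splitPt (E : ℕ → ℕ → Prop) (l r : ℕ) : ℕ :=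
  if h : ∃ m, l < m ∧ m < r ∧
      ∀ i j, E i j → l ≤ i → j ≤ r → i < m → m < j → i = l ∧ j = r
  then h.choose else l + 1

lemma splitPt_lt (E : ℕ → ℕ → Prop) {l r : ℕ} (h : l + 1 < r) :
    l < splitPt E l r ∧ splitPt E l r < r := by
  classical
  rw [splitPt]
  split
  · next hex => exact ⟨hex.choose_spec.1, hex.choose_spec.2.1⟩
  · omega

lemma splitPt_spec (E : ℕ → ℕ → Prop) (hE : Noncross E) {l r : ℕ} (h : l + 2 ≤ r) :
    ∀ i j, E i j → l ≤ i → j ≤ r → i < splitPt E l r → splitPt E l r < j →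
      i = l ∧ j = r := by
  classical
  rw [splitPt]
  split
  · next hex => exact hex.choose_spec.2.2
  · next hex => exact absurd (split_exists E hE l r h) hex

noncomputable def place (E : ℕ → ℕ → Prop) (l r : ℕ) (X Y : List Bool) (v : ℕ) :
    List Bool :=
  if hr : r ≤ l + 1 then (if v = r then Y else X)
  else
    if v ≤ splitPt E l r then place E l (splitPt E l r) X (apex X Y) v
    else place E (splitPt E l r) r (apex X Y) Y v
termination_by r - l
decreasing_by
  · have := splitPt_lt E (show l + 1 < r by omega)
    omega
  · have := splitPt_lt E (show l + 1 < r by omega)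
    omega

lemma place_left (E : ℕ → ℕ → Prop) :
    ∀ n l r X Y, r - l ≤ n → l < r → place E l r X Y l = X := by
  intro n
  induction n with
  | zero => intro l r X Y h1 h2; omega
  | succ n ih =>
    intro l r X Y h1 h2
    rw [place]
    by_cases hr : r ≤ l + 1
    · rw [dif_pos hr, if_neg (by omega)]
    · have hm := splitPt_lt E (show l + 1 < r by omega)
      rw [dif_neg hr, if_pos (by omega)]
      exact ih l _ X (apex X Y) (by omega) (by omega)

lemma place_right (E : ℕ → ℕ → Prop) :
    ∀ n l r X Y, r - l ≤ n → place E l r X Y r = Y := by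
  intro n
  induction n with
  | zero =>
    intro l r X Y h1
    rw [place, dif_pos (by omega), if_pos rfl]
  | succ n ih =>
    intro l r X Y h1
    rw [place]
    by_cases hr : r ≤ l + 1
    · rw [dif_pos hr, if_pos rfl]
    · have hm := splitPt_lt E (show l + 1 < r by omega)
      rw [dif_neg hr, if_neg (by omega)]
      exact ih _ r (apex X Y) Y (by omega)

lemma place_prefix (E : ℕ → ℕ → Prop) :
    ∀ n l r X Y, r - l ≤ n → EdgeOK X Y →
      ∀ v, l < v → v < r → apex X Y <+: place E l r X Y v := by
  intro n
  induction n with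
  | zero => intro l r X Y h1 _ v hv1 hv2; omega
  | succ n ih =>
    intro l r X Y h1 hXY v hv1 hv2
    obtain ⟨b, e1, e2, ha1, ha2, lx, ly, lne⟩ := apex_spec hXY
    rw [place]
    by_cases hr : r ≤ l + 1
    · omega
    · have hm := splitPt_lt E (show l + 1 < r by omega)
      set m := splitPt E l r with hmdef
      rw [dif_neg hr]
      by_cases hvm : v ≤ m
      · rw [if_pos hvm]
        rcases eq_or_lt_of_le hvm with hvm' | hvm'
        · rw [hvm', place_right E n l m X (apex X Y) (by omega)]
        · have := ih l m X (apex X Y) (by omega) e1 v hv1 hvm'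
          calc apex X Y <+: apex X (apex X Y) := ⟨[b], ha1.symm ▸ rfl⟩
            _ <+: _ := this
      · rw [if_neg hvm]
        have := ih m r (apex X Y) Y (by omega) e2 v (by omega) hv2
        calc apex X Y <+: apex (apex X Y) Y := ⟨[!b], ha2.symm ▸ rfl⟩
          _ <+: _ := this

lemma ne_of_length_lt {X Y : List Bool} (h : X.length < Y.length) : X ≠ Y := by
  intro he; rw [he] at h; omega

lemma prefix_cons_ne {A : List Bool} {b b' : Bool} {P Q : List Bool}
    (h1 : A ++ [b] <+: P) (h2 : A ++ [b'] <+: Q) (hb : b ≠ b') : P ≠ Q := by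
  obtain ⟨t1, ht1⟩ := h1
  obtain ⟨t2, ht2⟩ := h2
  intro he
  rw [← ht1, ← ht2] at he
  simp only [List.append_assoc] at he
  have := List.append_cancel_left he
  simp at this
  exact hb this.1

lemma place_inj (E : ℕ → ℕ → Prop) :
    ∀ n l r X Y, r - l ≤ n → EdgeOK X Y →
      ∀ v w, l ≤ v → v < w → w ≤ r → place E l r X Y v ≠ place E l r X Y w := by
  intro n
  induction n with
  | zero => intro l r X Y h1 _ v w hv hvw hw; omega
  | succ n ih =>
    intro l r X Y h1 hXY v w hv hvw hw
    obtain ⟨b, e1, e2, ha1, ha2, lx, ly, lne⟩ := apex_spec hXY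
    by_cases hr : r ≤ l + 1
    · -- v = l, w = r = l + 1
      have hv' : v = l := by omega
      have hw' : w = r := by omega
      rw [hv', hw', place_left E (n+1) l r X Y h1 (by omega),
        place_right E (n+1) l r X Y h1]
      exact fun he => lne (by rw [he])
    · have hm := splitPt_lt E (show l + 1 < r by omega)
      set m := splitPt E l r with hmdef
      set A := apex X Y with hA
      have eqv : ∀ u, l ≤ u → u ≤ r → place E l r X Y u =
          (if u ≤ m then place E l m X A u else place E m r A Y u) := by
        intro u _ _
        rw [place, dif_neg hr]
      have leftval : ∀ u, l ≤ u → u ≤ m →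
          place E l m X A u = X ∨ place E l m X A u = A ∨
          (A ++ [b]) <+: place E l m X A u := by
        intro u h1' h2'
        rcases eq_or_lt_of_le h1' with h | h
        · left; rw [← h, place_left E n l m X A (by omega) (by omega)]
        rcases eq_or_lt_of_le h2' with h' | h'
        · right; left; rw [h', place_right E n l m X A (by omega)]
        · right; right
          have := place_prefix E n l m X A (by omega) e1 u h h'
          rwa [ha1] at this
      have rightval : ∀ u, m < u → u ≤ r →
          place E m r A Y u = Y ∨ (A ++ [!b]) <+: place E m r A Y u := by
        intro u h1' h2'
        rcases eq_or_lt_of_le h2' with h' | h'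
        · left; rw [h', place_right E n m r A Y (by omega)]
        · right
          have := place_prefix E n m r A Y (by omega) e2 u h1' h'
          rwa [ha2] at this
      rw [eqv v hv (by omega), eqv w (by omega) hw]
      by_cases hvm : v ≤ m <;> by_cases hwm : w ≤ m
      · rw [if_pos hvm, if_pos hwm]
        exact ih l m X A (by omega) e1 v w hv hvw hwm
      · rw [if_pos hvm, if_neg hwm]
        rcases leftval v hv hvm with hL | hL | hL <;>
          rcases rightval w (by omega) hw with hR | hR
        · rw [hL, hR]; exact fun he => lne (by rw [he])
        · intro he
          rw [hL] at he
          have h2 := hR.length_le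
          rw [← he] at h2
          simp only [List.length_append, List.length_cons, List.length_nil] at h2
          omega
        · rw [hL, hR]
          exact (ne_of_length_lt ly).symm
        · have h2 := hR.length_le
          simp only [List.length_append, List.length_cons, List.length_nil] at h2
          intro he
          rw [hL] at he
          rw [← he] at h2
          omega
        · have h2 := hL.length_le
          simp only [List.length_append, List.length_cons, List.length_nil] at h2
          intro he
          rw [hR] at he
          rw [he] at h2
          omega
        · exact prefix_cons_ne hL hR (by simp)
      · omega
      · rw [if_neg hvm, if_neg hwm]
        exact ih m r A Y (by omega) e2 v w (by omega) hvw hw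

lemma place_edges (E : ℕ → ℕ → Prop) (hE : Noncross E) :
    ∀ n l r X Y, r - l ≤ n → EdgeOK X Y →
      ∀ i j, E i j → i < j → l ≤ i → j ≤ r →
        EdgeOK (place E l r X Y i) (place E l r X Y j) := by
  intro n
  induction n with
  | zero => intro l r X Y h1 _ i j _ hij hli hjr; omega
  | succ n ih =>
    intro l r X Y h1 hXY i j he hij hli hjr
    obtain ⟨b, e1, e2, ha1, ha2, lx, ly, lne⟩ := apex_spec hXY
    by_cases hr : r ≤ l + 1
    · have hi' : i = l := by omega
      have hj' : j = r := by omega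
      rw [hi', hj', place_left E (n+1) l r X Y h1 (by omega),
        place_right E (n+1) l r X Y h1]
      exact hXY
    · have hm := splitPt_lt E (show l + 1 < r by omega)
      have hspl := splitPt_spec E hE (show l + 2 ≤ r by omega)
      set m := splitPt E l r with hmdef
      set A := apex X Y with hA
      have eqv : ∀ u, place E l r X Y u =
          (if u ≤ m then place E l m X A u else place E m r A Y u) := by
        intro u
        rw [place, dif_neg hr]
      rw [eqv i, eqv j]
      by_cases hjm : j ≤ m
      · rw [if_pos (by omega), if_pos hjm]
        exact ih l m X A (by omega) e1 i j he hij hli hjm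
      · by_cases him : i ≤ m
        · rcases eq_or_lt_of_le him with h' | h'
          · -- i = m : both right interval
            rw [if_pos him, if_neg hjm, h']
            rw [place_right E n l m X A (by omega)]
            have := ih m r A Y (by omega) e2 m j ?_ (by omega) (le_refl m) hjr
            · rw [place_left E n m r A Y (by omega) (by omega)] at this
              exact this
            · rw [← h']; exact he
          · -- i < m < j : must be the full edge
            have := hspl i j he hli hjr h' (by omega)
            rw [if_pos him, if_neg hjm, this.1, this.2,
              place_left E n l m X A (by omega) (by omega),
              place_right E n m r A Y (by omega)]
            exact hXY
        · rw [if_neg him, if_neg hjm]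
          exact ih m r A Y (by omega) e2 i j he hij (by omega) hjr

noncomputable def crs (u v : ℂ) : ℝ := u.re * v.im - u.im * v.re

lemma trig_id (a b t : ℝ) :
    (Real.cos (2*b) - Real.cos (2*a)) * (Real.sin (2*t) - Real.sin (2*a))
      - (Real.sin (2*b) - Real.sin (2*a)) * (Real.cos (2*t) - Real.cos (2*a))
    = 4 * Real.sin (b-a) * Real.sin (t-a) * Real.sin (t-b) := by
  rw [Real.cos_two_mul', Real.cos_two_mul', Real.cos_two_mul',
    Real.sin_two_mul, Real.sin_two_mul, Real.sin_two_mul,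
    Real.sin_sub, Real.sin_sub, Real.sin_sub]
  linear_combination
    (-2*Real.sin t*Real.cos t + 2*Real.sin b*Real.cos b
      - 4*Real.sin b*Real.cos b*Real.sin t^2
      + 4*Real.sin b^2*Real.sin t*Real.cos t) * Real.sin_sq_add_cos_sq a
    + (2*Real.sin t*Real.cos t - 2*Real.sin a*Real.cos a
      + 4*Real.sin a*Real.cos a*Real.sin t^2
      - 4*Real.sin a^2*Real.sin t*Real.cos t) * Real.sin_sq_add_cos_sq b
    + (-2*Real.sin b*Real.cos b + 2*Real.sin a*Real.cos a
      - 4*Real.sin a*Real.cos a*Real.sin b^2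
      + 4*Real.sin a^2*Real.sin b*Real.cos b) * Real.sin_sq_add_cos_sq t

lemma crs_exp (α β θ : ℝ) :
    crs (Complex.exp (β*Complex.I) - Complex.exp (α*Complex.I))
        (Complex.exp (θ*Complex.I) - Complex.exp (α*Complex.I))
    = 4 * Real.sin ((β-α)/2) * Real.sin ((θ-α)/2) * Real.sin ((θ-β)/2) := by
  have h := trig_id (α/2) (β/2) (θ/2)
  rw [show (2:ℝ)*(α/2) = α by ring, show (2:ℝ)*(β/2) = β by ring,
    show (2:ℝ)*(θ/2) = θ by ring,
    show β/2 - α/2 = (β-α)/2 by ring, show θ/2 - α/2 = (θ-α)/2 by ring,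
    show θ/2 - β/2 = (θ-β)/2 by ring] at h
  simp only [crs, Complex.sub_re, Complex.sub_im,
    Complex.exp_ofReal_mul_I_re, Complex.exp_ofReal_mul_I_im]
  linear_combination h

lemma crs_affine (w p z₁ z₂ : ℂ) (u v : ℝ) (huv : u + v = 1) :
    crs w ((u • z₁ + v • z₂) - p) = u * crs w (z₁ - p) + v * crs w (z₂ - p) := by
  simp only [crs, Complex.add_re, Complex.add_im, Complex.sub_re, Complex.sub_im,
    Complex.real_smul, Complex.mul_re, Complex.mul_im,
    Complex.ofReal_re, Complex.ofReal_im]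
  linear_combination (w.re * p.im - w.im * p.re) * huv

lemma zero_combo {gc gd : ℝ} (h1 : gc < 0) (h2 : 0 < gd) :
    ∃ t : ℝ, 0 < t ∧ t < 1 ∧ (1 - t) * gc + t * gd = 0 := by
  refine ⟨gc / (gc - gd), div_pos_of_neg_of_neg h1 (by linarith), ?_, ?_⟩
  · rw [show gc / (gc - gd) = (-gc) / (gd - gc) by
      rw [show gc - gd = -(gd - gc) by ring, div_neg, neg_div]]
    rw [div_lt_one (by linarith)]
    linarith
  · have h3 : gc / (gc - gd) * (gc - gd) = gc := div_mul_cancel₀ gc (by linarith)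
    linear_combination -h3

lemma line_param {w u : ℂ} (hw : w ≠ 0) (hc : w.re * u.im = w.im * u.re) :
    ∃ s : ℝ, u = s • w := by
  have hnorm : w.re^2 + w.im^2 ≠ 0 := by
    intro h0
    apply hw
    have h1' : w.re = 0 := by nlinarith [sq_nonneg w.re, sq_nonneg w.im]
    have h2' : w.im = 0 := by nlinarith [sq_nonneg w.re, sq_nonneg w.im]
    exact Complex.ext h1' h2'
  refine ⟨(u.re*w.re + u.im*w.im)/(w.re^2+w.im^2), ?_⟩
  apply Complex.ext
  · rw [Complex.real_smul, Complex.mul_re, Complex.ofReal_re, Complex.ofReal_im]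
    field_simp
    linear_combination (-w.im) * hc
  · rw [Complex.real_smul, Complex.mul_im, Complex.ofReal_re, Complex.ofReal_im]
    field_simp
    linear_combination (w.re) * hc

lemma seg_param {ha hb s : ℝ} (h1 : 0 < ha) (h2 : hb < 0)
    (heq : (1-s) * ha + s * hb = 0) : 0 < s ∧ s < 1 := by
  constructor <;> nlinarith

lemma chords_intersect {α γ β δ : ℝ} (hπα : -π < α) (h1 : α < γ) (h2 : γ < β)
    (h3 : β < δ) (hδ : δ ≤ π) :
    (openSegment ℝ (Complex.exp (α*Complex.I)) (Complex.exp (β*Complex.I)) ∩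
     openSegment ℝ (Complex.exp (γ*Complex.I)) (Complex.exp (δ*Complex.I))).Nonempty := by
  set A := Complex.exp (α*Complex.I) with hAdef
  set B := Complex.exp (β*Complex.I) with hBdef
  set C := Complex.exp (γ*Complex.I) with hCdef
  set D := Complex.exp (δ*Complex.I) with hDdef
  have pi_pos := Real.pi_pos
  have sβα : 0 < Real.sin ((β-α)/2) :=
    Real.sin_pos_of_pos_of_lt_pi (by linarith) (by linarith)
  have sγα : 0 < Real.sin ((γ-α)/2) :=
    Real.sin_pos_of_pos_of_lt_pi (by linarith) (by linarith)
  have sδα : 0 < Real.sin ((δ-α)/2) :=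
    Real.sin_pos_of_pos_of_lt_pi (by linarith) (by linarith)
  have sδβ : 0 < Real.sin ((δ-β)/2) :=
    Real.sin_pos_of_pos_of_lt_pi (by linarith) (by linarith)
  have sδγ : 0 < Real.sin ((δ-γ)/2) :=
    Real.sin_pos_of_pos_of_lt_pi (by linarith) (by linarith)
  have sβγ : 0 < Real.sin ((β-γ)/2) :=
    Real.sin_pos_of_pos_of_lt_pi (by linarith) (by linarith)
  have sγβ : Real.sin ((γ-β)/2) < 0 := by
    have : Real.sin ((γ-β)/2) = - Real.sin ((β-γ)/2) := by
      rw [← Real.sin_neg]; ring_nf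
    rw [this]; linarith
  have sαγ : Real.sin ((α-γ)/2) < 0 := by
    have : Real.sin ((α-γ)/2) = - Real.sin ((γ-α)/2) := by
      rw [← Real.sin_neg]; ring_nf
    rw [this]; linarith
  have sαδ : Real.sin ((α-δ)/2) < 0 := by
    have : Real.sin ((α-δ)/2) = - Real.sin ((δ-α)/2) := by
      rw [← Real.sin_neg]; ring_nf
    rw [this]; linarith
  have sβδ : Real.sin ((β-δ)/2) < 0 := by
    have : Real.sin ((β-δ)/2) = - Real.sin ((δ-β)/2) := by
      rw [← Real.sin_neg]; ring_nf
    rw [this]; linarith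
  have gC : crs (B - A) (C - A) < 0 := by
    rw [hAdef, hBdef, hCdef, crs_exp]
    exact mul_neg_of_pos_of_neg (mul_pos (by linarith) sγα) sγβ
  have gD : 0 < crs (B - A) (D - A) := by
    rw [hAdef, hBdef, hDdef, crs_exp]
    exact mul_pos (mul_pos (by linarith) sδα) sδβ
  have hA2 : 0 < crs (D - C) (A - C) := by
    rw [hCdef, hDdef, hAdef, crs_exp]
    have := mul_pos_of_neg_of_neg sαγ sαδ
    nlinarith
  have hB2 : crs (D - C) (B - C) < 0 := by
    rw [hCdef, hDdef, hBdef, crs_exp]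
    exact mul_neg_of_pos_of_neg (mul_pos (by linarith) sβγ) sβδ
  clear_value A B C D
  clear hAdef hBdef hCdef hDdef
  obtain ⟨t, ht0, ht1, hteq⟩ := zero_combo gC gD
  set x := (1 - t) • C + t • D with hxdef
  clear_value x
  have hmemCD : x ∈ openSegment ℝ C D := ⟨1 - t, t, by linarith, ht0, by ring, hxdef.symm⟩
  have hgx : crs (B - A) (x - A) = 0 := by
    rw [hxdef, crs_affine (B - A) A C D (1 - t) t (by ring)]
    exact hteq
  have hBA : B - A ≠ 0 := by
    intro h0
    rw [h0] at gD
    simp [crs] at gD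
  have hcross : (B - A).re * (x - A).im = (B - A).im * (x - A).re := by
    have h5 := hgx
    simp only [crs] at h5
    linarith only [h5]
  obtain ⟨s, hxs⟩ := line_param hBA hcross
  have hxAB : x = (1 - s) • A + s • B := by
    have hx1 : (1 - s) • A + s • B = A + s • (B - A) := by
      rw [Complex.real_smul, Complex.real_smul, Complex.real_smul]
      push_cast
      ring
    rw [hx1, ← hxs]
    ring
  have heq : (1 - s) * crs (D - C) (A - C) + s * crs (D - C) (B - C) = 0 := by
    rw [← crs_affine (D - C) C A B (1 - s) s (by ring), ← hxAB]
    rw [hxdef, crs_affine (D - C) C C D (1 - t) t (by ring)]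
    have h1' : crs (D - C) (C - C) = 0 := by simp [crs]
    have h2' : crs (D - C) (D - C) = 0 := by simp only [crs]; ring
    rw [h1', h2']; ring
  obtain ⟨hs0, hs1⟩ := seg_param hA2 hB2 heq
  have hmemAB : x ∈ openSegment ℝ A B :=
    ⟨1 - s, s, by linarith only [hs1], hs0, by ring, hxAB.symm⟩
  exact ⟨x, hmemAB, hmemCD⟩

end Aux

/-- Every finite outerplanar graph is isomorphic to a subgraph of
the universal infinite complete outerplanar graph `T*`. -/
theorem outerplanar_embeds_in_Tstar
    {V : Type*} [Fintype V] (G : SimpleGraph V)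
    (h : ∃ f : V → ℂ, Function.Injective f ∧ (∀ v, ‖f v‖ = 1) ∧
      ∀ a b c d : V, G.Adj a b → G.Adj c d →
        a ≠ c → a ≠ d → b ≠ c → b ≠ d →
        openSegment ℝ (f a) (f b) ∩ openSegment ℝ (f c) (f d) = ∅) :
    ∃ f : V → {l : List Bool // TstarVert l}, Function.Injective f ∧
      ∀ a b : V, G.Adj a b → Tstar.Adj (f a) (f b) := by
  classical
  obtain ⟨f0, hinj, hnorm1, hsep⟩ := h
  set n := Fintype.card V with hn
  rcases Nat.lt_or_ge n 2 with hn2 | hn2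
  · -- n = 0 or 1 : trivial
    have hsub : Subsingleton V := by
      rw [← Fintype.card_le_one_iff_subsingleton]
      omega
    refine ⟨fun _ => ⟨[false], Or.inl rfl⟩, fun v w _ => Subsingleton.elim v w, ?_⟩
    intro a b hadj
    exact absurd (Subsingleton.elim a b) (G.ne_of_adj hadj)
  · -- main case
    set θ : V → ℝ := fun v => (f0 v).arg with hθ
    have hexp : ∀ v, f0 v = Complex.exp (θ v * Complex.I) := by
      intro v
      have h1 := Complex.norm_mul_exp_arg_mul_I (f0 v)
      have h2 : ‖f0 v‖ = 1 := by
        exact hnorm1 v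
      rw [h2] at h1
      simpa using h1.symm
    have hθinj : Function.Injective θ := by
      intro v w hvw
      apply hinj
      rw [hexp v, hexp w, hvw]
    have hθmem : ∀ v, θ v ∈ Set.Ioc (-Real.pi) Real.pi := fun v => Complex.arg_mem_Ioc _
    -- order the vertices by angle
    set s : Finset ℝ := Finset.univ.image θ with hs
    have hcard : s.card = n := by
      rw [hs, Finset.card_image_of_injective _ hθinj, Finset.card_univ]
    set o := s.orderIsoOfFin hcard with ho
    have hex : ∀ i : Fin n, ∃ v : V, θ v = (o i : ℝ) := by
      intro i
      have h2 : (o i : ℝ) ∈ Finset.univ.image θ := (o i).2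
      obtain ⟨v, _, hv⟩ := Finset.mem_image.mp h2
      exact ⟨v, hv⟩
    set e : Fin n → V := fun i => (hex i).choose with he
    have heθ : ∀ i, θ (e i) = (o i : ℝ) := fun i => (hex i).choose_spec
    have hemono : ∀ i j : Fin n, i < j → θ (e i) < θ (e j) := by
      intro i j hij
      rw [heθ i, heθ j]
      exact (Subtype.coe_lt_coe).mpr (o.lt_iff_lt.mpr hij)
    have heinj : Function.Injective e := by
      intro i j hij
      rcases lt_trichotomy i j with hc | hc | hc
      · exact absurd (hij ▸ hemono i j hc) (lt_irrefl _)
      · exact hc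
      · exact absurd (hij ▸ hemono j i hc) (lt_irrefl _)
    have hebij : Function.Bijective e :=
      (Fintype.bijective_iff_injective_and_card e).mpr ⟨heinj, by simp [hn]⟩
    set ε : Fin n ≃ V := Equiv.ofBijective e hebij with hε
    -- the abstract noncrossing edge relation
    set E : ℕ → ℕ → Prop := fun i j => i < j ∧ ∃ hi : i < n, ∃ hj : j < n,
      G.Adj (e ⟨i, hi⟩) (e ⟨j, hj⟩) with hE
    have hEN : Noncross E := by
      rintro i j k l ⟨hij, hi, hj, hadj1⟩ ⟨hkl, hk, hl, hadj2⟩ h1 h2 h3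
      set a := e ⟨i, hi⟩
      set b := e ⟨j, hj⟩
      set c := e ⟨k, hk⟩
      set d := e ⟨l, hl⟩
      have hac : θ a < θ c := hemono _ _ (by simp [Fin.lt_def]; omega)
      have hcb : θ c < θ b := hemono _ _ (by simp [Fin.lt_def]; omega)
      have hbd : θ b < θ d := hemono _ _ (by simp [Fin.lt_def]; omega)
      have hπa : -Real.pi < θ a := (hθmem a).1
      have hπd : θ d ≤ Real.pi := (hθmem d).2
      have hint := chords_intersect hπa hac hcb hbd hπd
      rw [← hexp a, ← hexp b, ← hexp c, ← hexp d] at hint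
      have hne : ∀ {p q : Fin n}, p ≠ q → e p ≠ e q := fun hpq hee => hpq (heinj hee)
      have hempty := hsep a b c d hadj1 hadj2
        (hne (by simp [Fin.ext_iff]; omega)) (hne (by simp [Fin.ext_iff]; omega))
        (hne (by simp [Fin.ext_iff]; omega)) (hne (by simp [Fin.ext_iff]; omega))
      rw [hempty] at hint
      exact Set.not_nonempty_empty hint
    -- the placement map
    have hXY : EdgeOK [false] [false, true] :=
      Or.inl ((adjrel_iff _ _).2 ⟨true, 0, by simp⟩)
    have hapexXY : apex [false] [false, true] = [false, true, false] := by
      rw [apex_eq_left (c := true) (L := []) (by simp)]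
      simp
    have hvert : ∀ i : ℕ, i ≤ n - 1 →
        TstarVert (place E 0 (n-1) [false] [false, true] i) := by
      intro i hle
      rcases Nat.eq_zero_or_pos i with h0 | h0
      · rw [h0, place_left E (n-1) 0 (n-1) _ _ (by omega) (by omega)]
        exact Or.inl rfl
      rcases eq_or_lt_of_le hle with h1 | h1
      · rw [h1, place_right E (n-1) 0 (n-1) _ _ (by omega)]
        exact Or.inr (Or.inl rfl)
      · have hpre := place_prefix E (n-1) 0 (n-1) _ _ (by omega) hXY i h0 h1
        rw [hapexXY] at hpre
        obtain ⟨tl, htl⟩ := hpre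
        exact Or.inr (Or.inr ⟨tl, by rw [← htl]; rfl⟩)
    have hidx : ∀ v : V, (ε.symm v : ℕ) ≤ n - 1 := by
      intro v
      have := (ε.symm v).isLt
      omega
    refine ⟨fun v => ⟨place E 0 (n-1) [false] [false, true] (ε.symm v : ℕ),
      hvert _ (hidx v)⟩, ?_, ?_⟩
    · intro v w hvw
      have hFeq : place E 0 (n-1) [false] [false, true] (ε.symm v : ℕ)
          = place E 0 (n-1) [false] [false, true] (ε.symm w : ℕ) :=
        congrArg Subtype.val hvw
      by_contra hne
      have hii : (ε.symm v : ℕ) ≠ (ε.symm w : ℕ) := by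
        intro h0
        exact hne (by
          have h3 : ε.symm v = ε.symm w := Fin.ext h0
          have h4 := congrArg ε h3
          simpa using h4)
      rcases Nat.lt_or_ge (ε.symm v : ℕ) (ε.symm w : ℕ) with hc | hc
      · exact place_inj E (n-1) 0 (n-1) _ _ (by omega) hXY _ _ (by omega) hc
          (hidx w) hFeq
      · exact place_inj E (n-1) 0 (n-1) _ _ (by omega) hXY _ _ (by omega)
          (by omega) (hidx v) hFeq.symm
    · intro a b hadj
      have hadjE : ∀ {p q : V}, G.Adj p q → (ε.symm p : ℕ) < (ε.symm q : ℕ) →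
          EdgeOK (place E 0 (n-1) [false] [false, true] (ε.symm p : ℕ))
            (place E 0 (n-1) [false] [false, true] (ε.symm q : ℕ)) := by
        intro p q hpq hlt
        have hEpq : E (ε.symm p : ℕ) (ε.symm q : ℕ) := by
          refine ⟨hlt, (ε.symm p).isLt, (ε.symm q).isLt, ?_⟩
          have h1 : e ⟨(ε.symm p : ℕ), (ε.symm p).isLt⟩ = p := by
            have h3 : (⟨(ε.symm p : ℕ), (ε.symm p).isLt⟩ : Fin n) = ε.symm p :=
              Fin.ext rfl
            rw [h3]
            exact ε.apply_symm_apply p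
          have h2 : e ⟨(ε.symm q : ℕ), (ε.symm q).isLt⟩ = q := by
            have h3 : (⟨(ε.symm q : ℕ), (ε.symm q).isLt⟩ : Fin n) = ε.symm q :=
              Fin.ext rfl
            rw [h3]
            exact ε.apply_symm_apply q
          rw [h1, h2]
          exact hpq
        exact place_edges E hEN (n-1) 0 (n-1) _ _ (by omega) hXY _ _ hEpq hlt
          (by omega) (hidx q)
      have hab : a ≠ b := G.ne_of_adj hadj
      have hiab : (ε.symm a : ℕ) ≠ (ε.symm b : ℕ) := by
        intro h0
        exact hab (by
          have h3 : ε.symm a = ε.symm b := Fin.ext h0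
          have h4 := congrArg ε h3
          simpa using h4)
      rcases Nat.lt_or_ge (ε.symm a : ℕ) (ε.symm b : ℕ) with hc | hc
      · exact hadjE hadj hc
      · exact Or.symm (hadjE hadj.symm (by omega))
end

section
/- In the infinite complete outerplanar graph T*, for every vertex v other than the two vertices 0 and 01 of the root edge, there exists a unique node N of the rhombus tree H* such that π(N, v_j) = v with j ∈ {2, 3} (i.e., v appears exactly once as one of the two 'new' vertices of a rhombus). -/
/-- The digit translation `b`: `0 ↦ 0`, `1 ↦ 10`, `2 ↦ 11`, applied to a trinary
path in the rhombus tree `H*`. -/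
def bmap (c : List (Fin 3)) : List Bool :=
  (c.map (fun d => if d = 0 then [false] else if d = 1 then [true, false] else [true, true])).flatten

/-- `π(H*_c, v_2)` (for `j = false`) and `π(H*_c, v_3)` (for `j = true`), where `c`
is the trinary path (after the root digit `1`) encoding a node of the rhombus tree:
`π(H*_a, v₂) = 0·b(a)` and `π(H*_a, v₃) = 0·b(a)·1`. -/
def piV23 (c : List (Fin 3)) (j : Bool) : List Bool :=
  [false, true, false] ++ bmap c ++ (if j then [true] else [])

/-- Decode a binary string into a trinary path plus a dangling-bit flag. -/
def decode : List Bool → List (Fin 3) × Bool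
  | [] => ([], false)
  | [true] => ([], true)
  | false :: t => ((0 : Fin 3) :: (decode t).1, (decode t).2)
  | true :: false :: t => ((1 : Fin 3) :: (decode t).1, (decode t).2)
  | true :: true :: t => ((2 : Fin 3) :: (decode t).1, (decode t).2)

lemma bmap_nil : bmap [] = [] := rfl

lemma bmap_cons (d : Fin 3) (c : List (Fin 3)) :
    bmap (d :: c) =
      (if d = 0 then [false] else if d = 1 then [true, false] else [true, true]) ++ bmap c := rfl

lemma dec_enc (c : List (Fin 3)) (j : Bool) :
    decode (bmap c ++ (if j then [true] else [])) = (c, j) := by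
  induction c with
  | nil => cases j <;> rfl
  | cons d c ih =>
      fin_cases d <;> cases j <;>
        simp_all [bmap, decode, List.append_assoc]

lemma enc_dec (t : List Bool) :
    bmap (decode t).1 ++ (if (decode t).2 then [true] else []) = t := by
  induction t using decode.induct <;> simp_all [decode, bmap, List.append_assoc] <;> assumption

/-- Every vertex of `T*` other than the root-edge vertices `0` and
`01` appears exactly once as a "new" vertex (`v₂` or `v₃`) of a rhombus node of `H*`. -/
theorem unique_node_as_new_vertex
    (v : List Bool) (hv : TstarVert v) (h0 : v ≠ [false]) (h1 : v ≠ [false, true]) :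
    ∃! p : List (Fin 3) × Bool, piV23 p.1 p.2 = v := by
  rcases hv with h | h | ⟨t, rfl⟩
  · exact absurd h h0
  · exact absurd h h1
  · refine ⟨decode t, ?_, ?_⟩
    · show piV23 (decode t).1 (decode t).2 = _
      simp [piV23, enc_dec t]
    · rintro ⟨c, j⟩ hq
      have ht : bmap c ++ (if j then [true] else []) = t := by
        simpa [piV23] using hq
      have := dec_enc c j
      rw [ht] at this
      simp [← this]
end
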